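/- Let X ⊆ ℝ^N be closed, and let x0,…,xn ∈ X be affinely independent with conv{x0,…,xn} ∩ ρX ⊆ {x0,…,xn}. Then either conv{x0,…,xn} ⊆ X, or conv{x0,…,xn} ∩ X = {x0,…,xn}. -/

import Mathlib

def AdjIn {E : Type*} [MetricSpace E] (X : Set E) (x y : E) : Prop :=
  x ∈ X ∧ y ∈ X ∧ x ≠ y ∧
    ¬ ∃ p ∈ X, p ≠ x ∧ p ≠ y ∧ dist x p + dist p y = dist x y

def innerBdry {E : Type*} [MetricSpace E] (X : Set E) : Set E :=
  {x | ∃ y, AdjIn X x y}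

lemma adjIn_symm {E : Type*} [MetricSpace E] {X : Set E} {u v : E} (h : AdjIn X u v) :
    AdjIn X v u := by
  obtain ⟨hu, hv, huv, hne⟩ := h
  refine ⟨hv, hu, huv.symm, ?_⟩
  rintro ⟨p, hp, h1, h2, hd⟩
  refine hne ⟨p, hp, h2, h1, ?_⟩
  rw [dist_comm v p, dist_comm p u, dist_comm v u] at hd
  linarith

lemma gap_lemma {N : ℕ} {X : Set (EuclideanSpace ℝ (Fin N))} (hX : IsClosed X)
    {b c w : EuclideanSpace ℝ (Fin N)} (hb : b ∈ X) (hc : c ∈ X)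
    (hw : w ∈ segment ℝ b c) (hwn : w ∉ X) :
    ∃ s r : ℝ, 0 ≤ s ∧ s < r ∧ r ≤ 1 ∧
      (b + s • (c - b)) ∈ X ∧ (b + r • (c - b)) ∈ X ∧
      AdjIn X (b + s • (c - b)) (b + r • (c - b)) := by
  have hbc : b ≠ c := by
    rintro rfl
    rw [segment_same] at hw
    rw [Set.mem_singleton_iff] at hw
    exact hwn (hw ▸ hb)
  set f : ℝ → EuclideanSpace ℝ (Fin N) := fun t => b + t • (c - b) with hf
  have hfc : Continuous f := by fun_prop
  have hcb : c - b ≠ 0 := sub_ne_zero.mpr (Ne.symm hbc)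
  have hfinj : Function.Injective f := by
    intro t1 t2 h
    have h' : (t1 - t2) • (c - b) = 0 := by
      simp only [hf] at h
      rw [sub_smul]
      have := add_left_cancel h
      rw [this]; abel
    rcases smul_eq_zero.mp h' with h'' | h''
    · linarith [sub_eq_zero.mp (by exact h'')]
    · exact absurd h'' hcb
  rw [segment_eq_image'] at hw
  obtain ⟨t₀, ht₀, hft₀⟩ := hw
  set T : Set ℝ := Set.Icc (0:ℝ) 1 ∩ f ⁻¹' X with hT
  have hTcpt : IsCompact T := isCompact_Icc.inter_right (hX.preimage hfc)
  have hf0 : f 0 = b := by simp [hf]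
  have hf1 : f 1 = c := by simp [hf]
  have h0T : (0:ℝ) ∈ T := ⟨⟨le_refl 0, zero_le_one⟩, by simp [hf0, hb]⟩
  have h1T : (1:ℝ) ∈ T := ⟨⟨zero_le_one, le_refl 1⟩, by simp [hf1, hc]⟩
  have ht₀T : t₀ ∉ T := fun h => hwn (hft₀ ▸ h.2)
  obtain ⟨s, hsT₁, hsmax⟩ :=
    (hTcpt.inter_right isClosed_Icc).exists_isGreatest
      ⟨0, h0T, le_refl 0, ht₀.1⟩
  obtain ⟨r, hrT₂, hrmin⟩ :=
    (hTcpt.inter_right isClosed_Icc).exists_isLeast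
      ⟨1, h1T, ht₀.2, le_refl 1⟩
  have hst₀ : s < t₀ := lt_of_le_of_ne hsT₁.2.2 (fun h => ht₀T (h ▸ hsT₁.1))
  have ht₀r : t₀ < r := lt_of_le_of_ne hrT₂.2.1 (fun h => ht₀T (h ▸ hrT₂.1))
  have hsr : s < r := hst₀.trans ht₀r
  refine ⟨s, r, hsT₁.1.1.1, hsr, hrT₂.1.1.2, hsT₁.1.2, hrT₂.1.2, hsT₁.1.2, hrT₂.1.2,
    fun h => hsr.ne (hfinj h), ?_⟩
  rintro ⟨p, hpX, hps, hpr, hd⟩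
  have hwb : Wbtw ℝ (f s) p (f r) := dist_add_dist_eq_iff.mp hd
  have hpseg := hwb.mem_segment
  rw [segment_eq_image'] at hpseg
  obtain ⟨θ, hθ, hpeq⟩ := hpseg
  have hfrs : f r - f s = (r - s) • (c - b) := by
    simp only [hf]; rw [sub_smul]; abel
  set t : ℝ := s + θ * (r - s) with htdef
  have hpt : p = f t := by
    rw [← hpeq, hfrs]
    simp only [hf, htdef, smul_smul, add_smul]
    abel
  have hts : t ≠ s := by
    intro h; exact hps (by rw [hpt, h])
  have htr : t ≠ r := by
    intro h; exact hpr (by rw [hpt, h])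
  have htlow : s ≤ t := by nlinarith [hθ.1, hsr]
  have hthigh : t ≤ r := by nlinarith [hθ.2, hsr]
  have htT : t ∈ T := ⟨⟨le_trans hsT₁.1.1.1 htlow, le_trans hthigh hrT₂.1.1.2⟩,
    by simpa [← hpt] using hpX⟩
  rcases le_total t t₀ with h | h
  · have : t ≤ s := hsmax ⟨htT, le_trans hsT₁.1.1.1 htlow, h⟩
    exact hts (le_antisymm this htlow)
  · have : r ≤ t := hrmin ⟨htT, h, le_trans hthigh hrT₂.1.1.2⟩
    exact htr (le_antisymm hthigh this)


lemma innerBdry_def {E : Type*} [MetricSpace E] (X : Set E) (x : E) :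
    x ∈ innerBdry X ↔ ∃ y, AdjIn X x y := Iff.rfl

lemma adjIn_def {E : Type*} [MetricSpace E] (X : Set E) (x y : E) :
    AdjIn X x y ↔ (x ∈ X ∧ y ∈ X ∧ x ≠ y ∧
      ¬ ∃ p ∈ X, p ≠ x ∧ p ≠ y ∧ dist x p + dist p y = dist x y) := Iff.rfl

lemma bary {N n : ℕ} {x : Fin (n+1) → EuclideanSpace ℝ (Fin N)} (hai : AffineIndependent ℝ x)
    {a : EuclideanSpace ℝ (Fin N)} (ha : a ∈ convexHull ℝ (Set.range x))
    {i j : Fin (n+1)} (hij : i ≠ j) {ρ : ℝ} (hρ : a = x i + ρ • (x j - x i)) :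
    0 ≤ ρ ∧ ρ ≤ 1 := by
  rw [convexHull_range_eq_exists_affineCombination] at ha
  obtain ⟨s, w, hw0, hw1, hcomb⟩ := ha
  rw [Finset.affineCombination_eq_linear_combination s x w hw1] at hcomb
  set w' : Fin (n+1) → ℝ := fun k => if k ∈ s then w k else 0 with hw'
  have hw'nonneg : ∀ k, 0 ≤ w' k := by
    intro k; simp only [hw']
    split
    · exact hw0 k (by assumption)
    · exact le_refl 0
  have hw'sum : ∑ k, w' k = 1 := by
    simp only [hw']
    rw [Finset.sum_ite_mem, Finset.univ_inter, hw1]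
  have hw'comb : ∑ k, w' k • x k = a := by
    simp only [hw', ite_smul, zero_smul]
    rw [Finset.sum_ite_mem, Finset.univ_inter, hcomb]
  set u : Fin (n+1) → ℝ := fun k => (if k = i then 1 - ρ else 0) + (if k = j then ρ else 0)
    with hu
  have husum : ∑ k, u k = 1 := by
    simp only [hu]
    rw [Finset.sum_add_distrib, Finset.sum_ite_eq', Finset.sum_ite_eq']
    simp
  have hucomb : ∑ k, u k • x k = a := by
    simp only [hu, add_smul, ite_smul, zero_smul]
    rw [Finset.sum_add_distrib, Finset.sum_ite_eq', Finset.sum_ite_eq']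
    simp only [Finset.mem_univ, if_true]
    rw [hρ]
    module
  have hkey : ∀ k, w' k - u k = 0 := by
    have hsum0 : Finset.univ.sum (fun k => w' k - u k) = 0 := by
      rw [Finset.sum_sub_distrib, hw'sum, husum, sub_self]
    have hcomb0 : ∑ k, (w' k - u k) • x k = 0 := by
      simp only [sub_smul]
      rw [Finset.sum_sub_distrib, hw'comb, hucomb, sub_self]
    intro k
    exact affineIndependent_iff.mp hai Finset.univ _ hsum0 hcomb0 k (Finset.mem_univ k)
  have hweq : ∀ k, w' k = u k := fun k => sub_eq_zero.mp (hkey k)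
  constructor
  · have := hw'nonneg j
    rw [hweq j] at this
    simpa [hu, hij.symm] using this
  · have := hw'nonneg i
    rw [hweq i] at this
    simp [hu, hij] at this
    linarith

lemma star_lemma {N n : ℕ} {X : Set (EuclideanSpace ℝ (Fin N))} (hX : IsClosed X)
    {x : Fin (n+1) → EuclideanSpace ℝ (Fin N)} (hai : AffineIndependent ℝ x)
    (hib : convexHull ℝ (Set.range x) ∩ innerBdry X ⊆ Set.range x)
    {a c : EuclideanSpace ℝ (Fin N)}
    (haS : a ∈ convexHull ℝ (Set.range x)) (haX : a ∈ X) (hav : a ∉ Set.range x)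
    (hcS : c ∈ convexHull ℝ (Set.range x)) (hcX : c ∈ X) :
    segment ℝ a c ⊆ X := by
  intro w hw
  by_contra hwn
  obtain ⟨s, r, hs0, hsr, hr1, huX, hvX, hadj⟩ := gap_lemma hX haX hcX hw hwn
  set u : EuclideanSpace ℝ (Fin N) := a + s • (c - a) with hu
  set v : EuclideanSpace ℝ (Fin N) := a + r • (c - a) with hv
  have hconv : Convex ℝ (convexHull ℝ (Set.range x)) := convex_convexHull ℝ _
  have huS : u ∈ convexHull ℝ (Set.range x) := by
    refine hconv.segment_subset haS hcS ?_
    rw [segment_eq_image']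
    exact ⟨s, ⟨hs0, hsr.le.trans hr1⟩, rfl⟩
  have hvS : v ∈ convexHull ℝ (Set.range x) := by
    refine hconv.segment_subset haS hcS ?_
    rw [segment_eq_image']
    exact ⟨r, ⟨hs0.trans hsr.le, hr1⟩, rfl⟩
  obtain ⟨i, hi⟩ := hib ⟨huS, (innerBdry_def X u).mpr ⟨v, hadj⟩⟩
  obtain ⟨j, hj⟩ := hib ⟨hvS, (innerBdry_def X v).mpr ⟨u, adjIn_symm hadj⟩⟩
  rcases eq_or_lt_of_le hs0 with h0 | h0
  · refine hav ⟨i, ?_⟩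
    rw [hi, hu, ← h0, zero_smul, add_zero]
  · have huv : u ≠ v := ((adjIn_def X u v).mp hadj).2.2.1
    have hij : i ≠ j := by rintro rfl; exact huv (hi ▸ hj ▸ rfl)
    have hrs0 : r - s ≠ 0 := sub_ne_zero.mpr hsr.ne'
    have key : (r - s) * (-s / (r - s)) = -s := by
      rw [mul_comm]; exact div_mul_cancel₀ (-s) hrs0
    have hz : (r - s) • (a - (x i + (-s / (r - s)) • (x j - x i))) = 0 := by
      rw [smul_sub, smul_add, smul_smul, key]
      have hi' : x i = a + s • (c - a) := hi
      have hj' : x j = a + r • (c - a) := hj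
      linear_combination (norm := module) (-r : ℝ) • hi' + (s : ℝ) • hj'
    have hz' : a - (x i + (-s / (r - s)) • (x j - x i)) = 0 := by
      rcases smul_eq_zero.mp hz with h | h
      · exact absurd h hrs0
      · exact h
    have ha' : a = x i + (-s / (r - s)) • (x j - x i) := sub_eq_zero.mp hz'
    have hb1 := (bary hai haS hij ha').1
    have : -s / (r - s) < 0 := div_neg_of_neg_of_pos (by linarith) (by linarith)
    linarith

lemma nonvertex {N n : ℕ} {x : Fin (n+1) → EuclideanSpace ℝ (Fin N)}
    (hai : AffineIndependent ℝ x) {a : EuclideanSpace ℝ (Fin N)}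
    (haS : a ∈ convexHull ℝ (Set.range x)) (hav : a ∉ Set.range x)
    {i : Fin (n+1)} {t : ℝ} (ht0 : 0 < t) (ht1 : t < 1) :
    a + t • (x i - a) ∉ Set.range x := by
  rintro ⟨k, hk⟩
  have h1t : (1:ℝ) - t ≠ 0 := by linarith
  by_cases hki : k = i
  · subst hki
    refine hav ⟨k, ?_⟩
    have h' : (1 - t) • (x k - a) = 0 := by
      rw [sub_smul, one_smul]
      linear_combination (norm := module) hk
    rcases smul_eq_zero.mp h' with h | h
    · exact absurd h h1t
    · have := sub_eq_zero.mp h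
      rw [this]
  · have key : (1 - t) * (-t / (1 - t)) = -t := by
      rw [mul_comm]; exact div_mul_cancel₀ (-t) h1t
    have hz : (1 - t) • (a - (x k + (-t / (1 - t)) • (x i - x k))) = 0 := by
      rw [smul_sub, smul_add, smul_smul, key]
      linear_combination (norm := module) (-1 : ℝ) • hk
    have hz' : a - (x k + (-t / (1 - t)) • (x i - x k)) = 0 := by
      rcases smul_eq_zero.mp hz with h | h
      · exact absurd h h1t
      · exact h
    have ha' : a = x k + (-t / (1 - t)) • (x i - x k) := sub_eq_zero.mp hz'
    have hb1 := (bary hai haS hki ha').1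
    have : -t / (1 - t) < 0 := div_neg_of_neg_of_pos (by linarith) (by linarith)
    linarith

variable {N n : ℕ} {X : Set (EuclideanSpace ℝ (Fin N))}
  {x : Fin (n+1) → EuclideanSpace ℝ (Fin N)} {a : EuclideanSpace ℝ (Fin N)}

lemma edge_lemma (hX : IsClosed X) (hxX : ∀ i, x i ∈ X) (hai : AffineIndependent ℝ x)
    (hib : convexHull ℝ (Set.range x) ∩ innerBdry X ⊆ Set.range x)
    (haS : a ∈ convexHull ℝ (Set.range x)) (haX : a ∈ X) (hav : a ∉ Set.range x)
    (i j : Fin (n+1)) : segment ℝ (x i) (x j) ⊆ X := by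
  intro m hm
  rw [segment_eq_image'] at hm
  obtain ⟨σ, hσ, rfl⟩ := hm
  have hconv : Convex ℝ (convexHull ℝ (Set.range x)) := convex_convexHull ℝ _
  have hxiS : x i ∈ convexHull ℝ (Set.range x) := subset_convexHull ℝ _ ⟨i, rfl⟩
  have hxjS : x j ∈ convexHull ℝ (Set.range x) := subset_convexHull ℝ _ ⟨j, rfl⟩
  set p : ℝ → EuclideanSpace ℝ (Fin N) := fun t => a + t • (x i - a) with hp
  set q : ℝ → EuclideanSpace ℝ (Fin N) := fun t => p t + σ • (x j - p t) with hq
  have hqX : ∀ t ∈ Set.Ioo (0:ℝ) 1, q t ∈ X := by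
    intro t ht
    have hptseg : p t ∈ segment ℝ a (x i) := by
      rw [segment_eq_image']
      exact ⟨t, ⟨ht.1.le, ht.2.le⟩, rfl⟩
    have hptX : p t ∈ X := star_lemma hX hai hib haS haX hav hxiS (hxX i) hptseg
    have hptS : p t ∈ convexHull ℝ (Set.range x) := hconv.segment_subset haS hxiS hptseg
    have hptnv : p t ∉ Set.range x := nonvertex hai haS hav ht.1 ht.2
    refine star_lemma hX hai hib hptS hptX hptnv hxjS (hxX j) ?_
    rw [segment_eq_image']
    exact ⟨σ, hσ, rfl⟩
  have hqcont : Continuous q := by fun_prop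
  have htend : Filter.Tendsto q (nhdsWithin 1 (Set.Iio 1)) (nhds (x i + σ • (x j - x i))) := by
    have h1 : q 1 = x i + σ • (x j - x i) := by simp [hq, hp]
    have := (hqcont.tendsto 1).mono_left (nhdsWithin_le_nhds (s := Set.Iio 1))
    rwa [h1] at this
  refine hX.mem_of_tendsto htend ?_
  have h1 : ∀ᶠ t in nhdsWithin (1:ℝ) (Set.Iio 1), t < 1 := eventually_mem_nhdsWithin
  have h2 : ∀ᶠ t in nhdsWithin (1:ℝ) (Set.Iio 1), (0:ℝ) < t :=
    Filter.Eventually.filter_mono nhdsWithin_le_nhds (eventually_gt_nhds one_pos)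
  filter_upwards [h1, h2] with t ht1 ht0
  exact hqX t ⟨ht0, ht1⟩

lemma seg_lemma (hX : IsClosed X) (hxX : ∀ i, x i ∈ X) (hai : AffineIndependent ℝ x)
    (hib : convexHull ℝ (Set.range x) ∩ innerBdry X ⊆ Set.range x)
    (haS : a ∈ convexHull ℝ (Set.range x)) (haX : a ∈ X) (hav : a ∉ Set.range x)
    {b c : EuclideanSpace ℝ (Fin N)}
    (hbS : b ∈ convexHull ℝ (Set.range x)) (hbX : b ∈ X)
    (hcS : c ∈ convexHull ℝ (Set.range x)) (hcX : c ∈ X) :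
    segment ℝ b c ⊆ X := by
  intro w hw
  by_contra hwn
  obtain ⟨s, r, hs0, hsr, hr1, huX, hvX, hadj⟩ := gap_lemma hX hbX hcX hw hwn
  set u : EuclideanSpace ℝ (Fin N) := b + s • (c - b) with hu
  set v : EuclideanSpace ℝ (Fin N) := b + r • (c - b) with hv
  have hconv : Convex ℝ (convexHull ℝ (Set.range x)) := convex_convexHull ℝ _
  have huS : u ∈ convexHull ℝ (Set.range x) := by
    refine hconv.segment_subset hbS hcS ?_
    rw [segment_eq_image']
    exact ⟨s, ⟨hs0, hsr.le.trans hr1⟩, rfl⟩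
  have hvS : v ∈ convexHull ℝ (Set.range x) := by
    refine hconv.segment_subset hbS hcS ?_
    rw [segment_eq_image']
    exact ⟨r, ⟨hs0.trans hsr.le, hr1⟩, rfl⟩
  obtain ⟨i, hi⟩ := hib ⟨huS, (innerBdry_def X u).mpr ⟨v, hadj⟩⟩
  obtain ⟨j, hj⟩ := hib ⟨hvS, (innerBdry_def X v).mpr ⟨u, adjIn_symm hadj⟩⟩
  obtain ⟨-, -, huv, hnp⟩ := (adjIn_def X u v).mp hadj
  have hmseg : midpoint ℝ u v ∈ segment ℝ (x i) (x j) := by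
    rw [hi, hj]; exact midpoint_mem_segment u v
  have hmX : midpoint ℝ u v ∈ X := edge_lemma hX hxX hai hib haS haX hav i j hmseg
  refine hnp ⟨midpoint ℝ u v, hmX, ?_, ?_, ?_⟩
  · rw [Ne, midpoint_eq_left_iff]; exact huv
  · rw [Ne, midpoint_eq_right_iff]; exact huv
  · rw [dist_left_midpoint u v, dist_midpoint_right u v]
    rw [show ‖(2:ℝ)‖ = 2 from by norm_num]
    ring

theorem stmt_12 {N : ℕ} (X : Set (EuclideanSpace ℝ (Fin N))) (hX : IsClosed X)
    (n : ℕ) (x : Fin (n + 1) → EuclideanSpace ℝ (Fin N))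
    (hxX : ∀ i, x i ∈ X) (hai : AffineIndependent ℝ x)
    (hib : convexHull ℝ (Set.range x) ∩ innerBdry X ⊆ Set.range x) :
    convexHull ℝ (Set.range x) ⊆ X ∨
    convexHull ℝ (Set.range x) ∩ X = Set.range x := by
  by_cases hA : ∃ a, a ∈ convexHull ℝ (Set.range x) ∧ a ∈ X ∧ a ∉ Set.range x
  · obtain ⟨a, haS, haX, hav⟩ := hA
    left
    have key : ∀ F : Finset (Fin (n+1)), convexHull ℝ (x '' ↑F) ⊆ X := by
      intro F
      induction F using Finset.induction_on with
      | empty => simp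
      | insert i F hiF ih =>
        rcases F.eq_empty_or_nonempty with rfl | hFne
        · intro z hz
          have hset : (x '' (↑(insert i (∅ : Finset (Fin (n+1)))) : Set (Fin (n+1)))) = {x i} := by
            simp
          rw [hset, convexHull_singleton, Set.mem_singleton_iff] at hz
          rw [hz]; exact hxX i
        · have himg : (x '' (↑F : Set (Fin (n+1)))).Nonempty :=
            (Finset.coe_nonempty.mpr hFne).image x
          intro z hz
          rw [Finset.coe_insert, Set.image_insert_eq, convexHull_insert himg,
            mem_convexJoin] at hz
          obtain ⟨p, hp, q, hq, hseg⟩ := hz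
          rw [Set.mem_singleton_iff] at hp
          subst hp
          have hqS : q ∈ convexHull ℝ (Set.range x) :=
            convexHull_mono (Set.image_subset_range x _) hq
          exact seg_lemma hX hxX hai hib haS haX hav
            (subset_convexHull ℝ _ ⟨i, rfl⟩) (hxX i) hqS (ih hq) hseg
    have h2 : convexHull ℝ (Set.range x) = convexHull ℝ (x '' ↑(Finset.univ : Finset (Fin (n+1)))) := by
      simp
    rw [h2]
    exact key _
  · right
    push_neg at hA
    ext z
    constructor
    · rintro ⟨hzS, hzX⟩
      by_contra h
      exact h (hA z hzS hzX)
    · rintro ⟨i, rfl⟩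
      exact ⟨subset_convexHull ℝ _ ⟨i, rfl⟩, hxX i⟩
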